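/- Let r be a binary relation on a set α such that the transitive closure of r is irreflexive (there is no x with a nonempty r-path from x back to x; i.e., r is acyclic). Then there exists a strict linear order < on α such that r x y implies x < y for all x, y ∈ α. -/

import Mathlib

/-- An acyclic relation (one whose transitive closure is irreflexive) extends
to a strict linear order. -/
theorem stmt9 {α : Type*} (r : α → α → Prop)
    (h : Irreflexive (Relation.TransGen r)) :
    ∃ lt : α → α → Prop, IsStrictTotalOrder α lt ∧ ∀ x y, r x y → lt x y := by
  classical
  set t : α → α → Prop := Relation.ReflTransGen r with ht
  have hpart : IsPartialOrder α t :=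
    { refl := fun x => Relation.ReflTransGen.refl
      trans := fun _ _ _ => Relation.ReflTransGen.trans
      antisymm := by
        intro a b hab hba
        by_contra hne
        rcases (Relation.reflTransGen_iff_eq_or_transGen.mp hab) with rfl | hab'
        · exact hne rfl
        rcases (Relation.reflTransGen_iff_eq_or_transGen.mp hba) with rfl | hba'
        · exact hne rfl
        exact h a (hab'.trans hba') }
  obtain ⟨s, hs, hts⟩ := extend_partialOrder t
  refine ⟨fun x y => s x y ∧ x ≠ y, ?_, ?_⟩
  · have irr : Irreflexive fun x y => s x y ∧ x ≠ y := fun x hx => hx.2 rfl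
    have tr : Transitive fun x y => s x y ∧ x ≠ y := by
      intro a b c hab hbc
      refine ⟨hs.trans a b c hab.1 hbc.1, ?_⟩
      rintro rfl
      exact hab.2 (hs.antisymm _ _ hab.1 hbc.1)
    have tri : ∀ a b : α, (s a b ∧ a ≠ b) ∨ a = b ∨ (s b a ∧ b ≠ a) := by
      intro a b
      by_cases hab : a = b
      · exact Or.inr (Or.inl hab)
      · rcases hs.total a b with hsab | hsba
        · exact Or.inl ⟨hsab, hab⟩
        · exact Or.inr (Or.inr ⟨hsba, Ne.symm hab⟩)
    exact { trichotomous := fun a b h1 h2 => by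
              rcases tri a b with h3 | h3 | h3
              exacts [(h1 h3).elim, h3, (h2 h3).elim],
            toIsStrictOrder := { irrefl := irr, toIsTrans := ⟨tr⟩ } }
  · intro x y hxy
    refine ⟨hts x y (Relation.ReflTransGen.single hxy), ?_⟩
    rintro rfl
    exact h x (Relation.TransGen.single hxy)
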